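/- Let n ≥ 1, M ≥ 2, and let X_1, …, X_M be zero-mean square-integrable ℝⁿ-valued random vectors whose joint (Mn)×(Mn) block covariance matrix K = (E[X_i X_j^T])_{i,j} is positive definite. For i = 2, …, M let K̃_{i−1} be the n×((i−1)n) matrix K̃_{i−1} = Cov(X_i, (X_1,…,X_{i−1})) · Cov((X_1,…,X_{i−1}))^{−1}, and let B_i = X_i − K̃_{i−1}(X_1,…,X_{i−1}) be the block Gram–Schmidt residual. Let N_2, …, N_M be zero-mean square-integrable ℝⁿ-valued random vectors with E[N_i N_i^T] = E[B_i B_i^T] for each i, such that X_1, N_2, …, N_M are mutually independent. Define X̃_1 = X_1 and X̃_i = K̃_{i−1}(X̃_1,…,X̃_{i−1}) + N_i for i = 2, …, M. Then E[X̃_i X̃_j^T] = E[X_i X_j^T] for all i, j, i.e. the block covariance matrix of (X̃_1, …, X̃_M) equals K. -/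

import Mathlib

open MeasureTheory ProbabilityTheory

section Aux

variable {Ω : Type*} [MeasurableSpace Ω] {μ : Measure Ω}

private lemma sq_aux_int_mul {f g : Ω → ℝ} (hf : MemLp f 2 μ) (hg : MemLp g 2 μ) :
    Integrable (fun ω => f ω * g ω) μ := by
  rw [← memLp_one_iff_integrable]
  have h := hg.smul (r := 1) hf
  exact h

private lemma sq_aux_coord {m : ℕ} {f : Ω → (Fin m → ℝ)} (hf : MemLp f 2 μ) (a : Fin m) :
    MemLp (fun ω => f ω a) 2 μ :=
  (ContinuousLinearMap.proj (R := ℝ) (φ := fun _ : Fin m => ℝ) a).comp_memLp' hf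

private lemma sq_memℒp_sum {ι : Type*} (s : Finset ι) (f : ι → Ω → ℝ)
    (hf : ∀ i ∈ s, MemLp (f i) 2 μ) : MemLp (fun ω => ∑ i ∈ s, f i ω) 2 μ :=
  memLp_finset_sum s hf

private lemma sq_memℒp_add {f g : Ω → ℝ} (hf : MemLp f 2 μ) (hg : MemLp g 2 μ) :
    MemLp (fun ω => f ω + g ω) 2 μ :=
  hf.add hg

private lemma sq_integral_mul_comm (f g : Ω → ℝ) :
    ∫ ω, f ω * g ω ∂μ = ∫ ω, g ω * f ω ∂μ := by
  simp_rw [mul_comm (f _) (g _)]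

private lemma sq_int_sum_mul {ι κ : Type*} (s : Finset ι) (t : Finset κ)
    (c : ι → κ → ℝ) (g : ι → κ → Ω → ℝ) (h : Ω → ℝ)
    (hg : ∀ k ∈ s, ∀ b ∈ t, MemLp (g k b) 2 μ) (hh : MemLp h 2 μ) :
    ∫ ω, (∑ k ∈ s, ∑ b ∈ t, c k b * g k b ω) * h ω ∂μ
      = ∑ k ∈ s, ∑ b ∈ t, c k b * ∫ ω, g k b ω * h ω ∂μ := by
  have h1 : (fun ω => (∑ k ∈ s, ∑ b ∈ t, c k b * g k b ω) * h ω)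
      = fun ω => ∑ k ∈ s, ∑ b ∈ t, c k b * (g k b ω * h ω) := by
    funext ω
    rw [Finset.sum_mul]
    exact Finset.sum_congr rfl fun k _ => by
      rw [Finset.sum_mul]
      exact Finset.sum_congr rfl fun b _ => mul_assoc _ _ _
  rw [show (∫ ω, (∑ k ∈ s, ∑ b ∈ t, c k b * g k b ω) * h ω ∂μ)
      = ∫ ω, ∑ k ∈ s, ∑ b ∈ t, c k b * (g k b ω * h ω) ∂μ from congrArg _ h1,
    integral_finset_sum s (fun k hk => integrable_finset_sum t
      (fun b hb => ((sq_aux_int_mul (hg k hk b hb) hh).const_mul _)))]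
  exact Finset.sum_congr rfl fun k hk => by
    rw [integral_finset_sum t (fun b hb => ((sq_aux_int_mul (hg k hk b hb) hh).const_mul _))]
    exact Finset.sum_congr rfl fun b hb => integral_const_mul _ _

private lemma sq_int_mul_sum {ι κ : Type*} (s : Finset ι) (t : Finset κ)
    (c : ι → κ → ℝ) (g : ι → κ → Ω → ℝ) (h : Ω → ℝ)
    (hg : ∀ k ∈ s, ∀ b ∈ t, MemLp (g k b) 2 μ) (hh : MemLp h 2 μ) :
    ∫ ω, h ω * (∑ k ∈ s, ∑ b ∈ t, c k b * g k b ω) ∂μ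
      = ∑ k ∈ s, ∑ b ∈ t, c k b * ∫ ω, h ω * g k b ω ∂μ := by
  rw [sq_integral_mul_comm, sq_int_sum_mul s t c g h hg hh]
  exact Finset.sum_congr rfl fun k hk => Finset.sum_congr rfl fun b hb => by
    rw [sq_integral_mul_comm]

private lemma sq_int_add_mul (f g h : Ω → ℝ) (hf : MemLp f 2 μ) (hg : MemLp g 2 μ)
    (hh : MemLp h 2 μ) :
    ∫ ω, (f ω + g ω) * h ω ∂μ = (∫ ω, f ω * h ω ∂μ) + ∫ ω, g ω * h ω ∂μ := by
  simp_rw [add_mul]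
  exact integral_add (sq_aux_int_mul hf hh) (sq_aux_int_mul hg hh)

private lemma sq_int_add_mul_add (f1 g1 f2 g2 : Ω → ℝ) (hf1 : MemLp f1 2 μ)
    (hg1 : MemLp g1 2 μ) (hf2 : MemLp f2 2 μ) (hg2 : MemLp g2 2 μ) :
    ∫ ω, (f1 ω + g1 ω) * (f2 ω + g2 ω) ∂μ
      = ((∫ ω, f1 ω * f2 ω ∂μ) + ∫ ω, f1 ω * g2 ω ∂μ)
        + ((∫ ω, g1 ω * f2 ω ∂μ) + ∫ ω, g1 ω * g2 ω ∂μ) := by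
  have i11 : Integrable (fun ω => f1 ω * f2 ω) μ := sq_aux_int_mul hf1 hf2
  have i12 : Integrable (fun ω => f1 ω * g2 ω) μ := sq_aux_int_mul hf1 hg2
  have i21 : Integrable (fun ω => g1 ω * f2 ω) μ := sq_aux_int_mul hg1 hf2
  have i22 : Integrable (fun ω => g1 ω * g2 ω) μ := sq_aux_int_mul hg1 hg2
  have iA : Integrable (fun ω => f1 ω * f2 ω + f1 ω * g2 ω) μ := i11.add i12
  have iB : Integrable (fun ω => g1 ω * f2 ω + g1 ω * g2 ω) μ := i21.add i22
  calc ∫ ω, (f1 ω + g1 ω) * (f2 ω + g2 ω) ∂μ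
      = ∫ ω, (f1 ω * f2 ω + f1 ω * g2 ω) + (g1 ω * f2 ω + g1 ω * g2 ω) ∂μ := by
        congr 1
        funext ω
        ring
    _ = (∫ ω, f1 ω * f2 ω + f1 ω * g2 ω ∂μ) + ∫ ω, g1 ω * f2 ω + g1 ω * g2 ω ∂μ :=
        integral_add iA iB
    _ = ((∫ ω, f1 ω * f2 ω ∂μ) + ∫ ω, f1 ω * g2 ω ∂μ)
        + ((∫ ω, g1 ω * f2 ω ∂μ) + ∫ ω, g1 ω * g2 ω ∂μ) := by
        rw [integral_add i11 i12, integral_add i21 i22]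

private lemma sq_int_sub_mul_sub (f1 g1 f2 g2 : Ω → ℝ) (hf1 : MemLp f1 2 μ)
    (hg1 : MemLp g1 2 μ) (hf2 : MemLp f2 2 μ) (hg2 : MemLp g2 2 μ) :
    ∫ ω, (f1 ω - g1 ω) * (f2 ω - g2 ω) ∂μ
      = ((∫ ω, f1 ω * f2 ω ∂μ) - ∫ ω, f1 ω * g2 ω ∂μ)
        - ((∫ ω, g1 ω * f2 ω ∂μ) - ∫ ω, g1 ω * g2 ω ∂μ) := by
  have i11 : Integrable (fun ω => f1 ω * f2 ω) μ := sq_aux_int_mul hf1 hf2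
  have i12 : Integrable (fun ω => f1 ω * g2 ω) μ := sq_aux_int_mul hf1 hg2
  have i21 : Integrable (fun ω => g1 ω * f2 ω) μ := sq_aux_int_mul hg1 hf2
  have i22 : Integrable (fun ω => g1 ω * g2 ω) μ := sq_aux_int_mul hg1 hg2
  have iA : Integrable (fun ω => f1 ω * f2 ω - f1 ω * g2 ω) μ := i11.sub i12
  have iB : Integrable (fun ω => g1 ω * f2 ω - g1 ω * g2 ω) μ := i21.sub i22
  calc ∫ ω, (f1 ω - g1 ω) * (f2 ω - g2 ω) ∂μ
      = ∫ ω, (f1 ω * f2 ω - f1 ω * g2 ω) - (g1 ω * f2 ω - g1 ω * g2 ω) ∂μ := by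
        congr 1
        funext ω
        ring
    _ = (∫ ω, f1 ω * f2 ω - f1 ω * g2 ω ∂μ) - ∫ ω, g1 ω * f2 ω - g1 ω * g2 ω ∂μ :=
        integral_sub iA iB
    _ = ((∫ ω, f1 ω * f2 ω ∂μ) - ∫ ω, f1 ω * g2 ω ∂μ)
        - ((∫ ω, g1 ω * f2 ω ∂μ) - ∫ ω, g1 ω * g2 ω ∂μ) := by
        rw [integral_sub i11 i12, integral_sub i21 i22]

private lemma sq_sum_swap4 {α β γ δ : Type*} (s : Finset α) (t : Finset β) (u : Finset γ)
    (v : Finset δ) (F : α → β → γ → δ → ℝ) :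
    ∑ k ∈ s, ∑ c ∈ t, ∑ l ∈ u, ∑ d ∈ v, F k c l d
      = ∑ l ∈ u, ∑ d ∈ v, ∑ k ∈ s, ∑ c ∈ t, F k c l d :=
  calc ∑ k ∈ s, ∑ c ∈ t, ∑ l ∈ u, ∑ d ∈ v, F k c l d
      = ∑ k ∈ s, ∑ l ∈ u, ∑ c ∈ t, ∑ d ∈ v, F k c l d :=
        Finset.sum_congr rfl fun k _ => Finset.sum_comm
    _ = ∑ l ∈ u, ∑ k ∈ s, ∑ c ∈ t, ∑ d ∈ v, F k c l d := Finset.sum_comm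
    _ = ∑ l ∈ u, ∑ k ∈ s, ∑ d ∈ v, ∑ c ∈ t, F k c l d :=
        Finset.sum_congr rfl fun l _ => Finset.sum_congr rfl fun k _ => Finset.sum_comm
    _ = ∑ l ∈ u, ∑ d ∈ v, ∑ k ∈ s, ∑ c ∈ t, F k c l d :=
        Finset.sum_congr rfl fun l _ => Finset.sum_comm

end Aux

/-- Gram–Schmidt orthogonalization vs. sequential (dithered) quantization, vector case:
a sequential additive-independent-noise system driven by the ℝⁿ-valued vector `X 0`,
with noise covariances matching the block Gram–Schmidt residual covariances,
reproduces the prescribed block covariance matrix `K`. -/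
theorem sequential_quantization_reproduces_covariance_vector
    {Ω : Type*} [MeasurableSpace Ω] (μ : Measure Ω) [IsProbabilityMeasure μ]
    (n : ℕ) (hn : 1 ≤ n) (M : ℕ) (hM : 2 ≤ M) [NeZero M]
    (X : Fin M → Ω → (Fin n → ℝ))
    (hX2 : ∀ i, MemLp (X i) 2 μ)
    (hXmean : ∀ i a, ∫ ω, X i ω a ∂μ = 0)
    -- the block covariance matrices `K i j = E[X i (X j)^T]`
    (K : Fin M → Fin M → Matrix (Fin n) (Fin n) ℝ)
    (hK : ∀ i j a b, K i j a b = ∫ ω, X i ω a * X j ω b ∂μ)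
    -- the joint (Mn)×(Mn) block covariance matrix is positive definite
    (hKpd : Matrix.PosDef (fun p q : Fin M × Fin n => K p.1 q.1 p.2 q.2))
    -- `C i` is the block row of linear MMSE coefficient matrices of `X i` given
    -- `X 0, …, X (i-1)`, characterized by the block normal equations (which determine
    -- it uniquely since the joint covariance matrix is positive definite).
    (C : Fin M → Fin M → Matrix (Fin n) (Fin n) ℝ)
    (hC : ∀ i k : Fin M, k < i →
      ∑ j ∈ Finset.Iio i, C i j * K j k = K i k)
    -- the block Gram–Schmidt residuals
    (B : Fin M → Ω → (Fin n → ℝ))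
    (hB : ∀ i : Fin M, B i = fun ω a =>
      X i ω a - ∑ j ∈ Finset.Iio i, ∑ b, C i j a b * X j ω b)
    -- the independent noises, with `E[N i (N i)^T] = E[B i (B i)^T]`
    (N : Fin M → Ω → (Fin n → ℝ))
    (hN2 : ∀ i, MemLp (N i) 2 μ)
    (hNmean : ∀ i a, ∫ ω, N i ω a ∂μ = 0)
    (hNcov : ∀ i : Fin M, 0 < i → ∀ a b,
      ∫ ω, N i ω a * N i ω b ∂μ = ∫ ω, B i ω a * B i ω b ∂μ)
    -- `X 0, N 1, …, N (M-1)` are mutually independent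
    (hIndep : iIndepFun
      (fun i : Fin M => if i = 0 then X 0 else N i) μ)
    -- the sequentially generated process
    (Xt : Fin M → Ω → (Fin n → ℝ))
    (hXt0 : Xt 0 = X 0)
    (hXtrec : ∀ i : Fin M, 0 < i →
      Xt i = fun ω a => (∑ j ∈ Finset.Iio i, ∑ b, C i j a b * Xt j ω b) + N i ω a) :
    ∀ i j a b, ∫ ω, Xt i ω a * Xt j ω b ∂μ = K i j a b := by
  -- coordinates are in L²
  have hXc : ∀ i a, MemLp (fun ω => X i ω a) 2 μ := fun i a => sq_aux_coord (hX2 i) a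
  have hNc : ∀ i a, MemLp (fun ω => N i ω a) 2 μ := fun i a => sq_aux_coord (hN2 i) a
  -- symmetry of K
  have hKsym : ∀ (i j : Fin M) (a b : Fin n), K i j a b = K j i b a := by
    intro i j a b
    rw [hK, hK, sq_integral_mul_comm]
  -- coordinates of Xt are in L²
  have hXtc : ∀ (i : Fin M) (a : Fin n), MemLp (fun ω => Xt i ω a) 2 μ := by
    have H : ∀ m : ℕ, ∀ i : Fin M, i.val = m → ∀ a, MemLp (fun ω => Xt i ω a) 2 μ := by
      intro m
      induction m using Nat.strong_induction_on with
      | _ m ih =>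
        intro i him a
        rcases eq_or_ne i 0 with h0 | h0
        · subst h0
          simp only [hXt0]
          exact hXc 0 a
        · have hi : 0 < i := lt_of_le_of_ne (Fin.zero_le i) (Ne.symm h0)
          simp only [hXtrec i hi]
          refine sq_memℒp_add ?_ (hNc i a)
          refine sq_memℒp_sum _ _ fun j hj => sq_memℒp_sum _ _ fun b _ => ?_
          have hji : j < i := Finset.mem_Iio.mp hj
          have hjv : j.val < i.val := hji
          exact (ih j.val (by omega) j rfl b).const_mul _
    exact fun i => H i.val i rfl
  -- membership for the linear-combination part
  have hSmem : ∀ (i : Fin M) (a : Fin n),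
      MemLp (fun ω => ∑ j ∈ Finset.Iio i, ∑ b, C i j a b * Xt j ω b) 2 μ := fun i a =>
    sq_memℒp_sum _ _ fun j _ => sq_memℒp_sum _ _ fun b _ => (hXtc j b).const_mul _
  have hSXmem : ∀ (i : Fin M) (a : Fin n),
      MemLp (fun ω => ∑ j ∈ Finset.Iio i, ∑ b, C i j a b * X j ω b) 2 μ := fun i a =>
    sq_memℒp_sum _ _ fun j _ => sq_memℒp_sum _ _ fun b _ => (hXc j b).const_mul _
  -- independence-based vanishing of mixed moments
  have hNX0 : ∀ p : Fin M, 0 < p → ∀ a b, ∫ ω, N p ω a * X 0 ω b ∂μ = 0 := by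
    intro p hp a b
    have h1 : IndepFun (N p) (X 0) μ := by
      have h := hIndep.indepFun (show p ≠ 0 from hp.ne')
      simpa [hp.ne'] using h
    have h2 : IndepFun (fun ω => N p ω a) (fun ω => X 0 ω b) μ :=
      h1.comp (measurable_pi_apply a) (measurable_pi_apply b)
    have h3 := h2.integral_mul_eq_mul_integral (hNc p a).aestronglyMeasurable (hXc 0 b).aestronglyMeasurable
    calc ∫ ω, N p ω a * X 0 ω b ∂μ
        = (∫ ω, N p ω a ∂μ) * ∫ ω, X 0 ω b ∂μ := h3
      _ = 0 := by rw [hNmean, hXmean, mul_zero]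
  have hNN : ∀ p q : Fin M, 0 < p → 0 < q → p ≠ q → ∀ a b,
      ∫ ω, N p ω a * N q ω b ∂μ = 0 := by
    intro p q hp hq hpq a b
    have h1 : IndepFun (N p) (N q) μ := by
      have h := hIndep.indepFun hpq
      simpa [hp.ne', hq.ne'] using h
    have h2 : IndepFun (fun ω => N p ω a) (fun ω => N q ω b) μ :=
      h1.comp (measurable_pi_apply a) (measurable_pi_apply b)
    have h3 := h2.integral_mul_eq_mul_integral (hNc p a).aestronglyMeasurable (hNc q b).aestronglyMeasurable
    calc ∫ ω, N p ω a * N q ω b ∂μ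
        = (∫ ω, N p ω a ∂μ) * ∫ ω, N q ω b ∂μ := h3
      _ = 0 := by rw [hNmean, hNmean, mul_zero]
  -- orthogonality of noise to earlier Xt
  have horth : ∀ p i : Fin M, i < p → ∀ a b, ∫ ω, Xt i ω b * N p ω a ∂μ = 0 := by
    intro p
    have H : ∀ m : ℕ, ∀ i : Fin M, i.val = m → i < p → ∀ a b,
        ∫ ω, Xt i ω b * N p ω a ∂μ = 0 := by
      intro m
      induction m using Nat.strong_induction_on with
      | _ m ih =>
        intro i him hip a b
        have hp : 0 < p := lt_of_le_of_lt (Fin.zero_le i) hip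
        rcases eq_or_ne i 0 with h0 | h0
        · subst h0
          simp only [hXt0]
          rw [sq_integral_mul_comm (fun ω => X 0 ω b) (fun ω => N p ω a)]
          exact hNX0 p hp a b
        · have hi : 0 < i := lt_of_le_of_ne (Fin.zero_le i) (Ne.symm h0)
          simp only [hXtrec i hi]
          rw [sq_int_add_mul (fun ω => ∑ j ∈ Finset.Iio i, ∑ c, C i j b c * Xt j ω c)
            (fun ω => N i ω b) (fun ω => N p ω a) (hSmem i b) (hNc i b) (hNc p a)]
          have hA : ∫ ω, (∑ j ∈ Finset.Iio i, ∑ c, C i j b c * Xt j ω c) * N p ω a ∂μ = 0 := by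
            rw [sq_int_sum_mul (Finset.Iio i) Finset.univ (fun j c => C i j b c)
              (fun j c ω => Xt j ω c) (fun ω => N p ω a)
              (fun j _ c _ => hXtc j c) (hNc p a)]
            refine Finset.sum_eq_zero fun j hj => Finset.sum_eq_zero fun c _ => ?_
            have hji : j < i := Finset.mem_Iio.mp hj
            have hjv : j.val < i.val := hji
            rw [ih j.val (by omega) j rfl (hji.trans hip) a c, mul_zero]
          have hB' : ∫ ω, N i ω b * N p ω a ∂μ = 0 :=
            hNN i p hi hp (ne_of_lt hip) b a
          rw [hA, hB', add_zero]
    exact fun i => H i.val i rfl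
  -- the main strong induction
  have main : ∀ m : ℕ, ∀ i : Fin M, i.val = m → ∀ j : Fin M, j ≤ i → ∀ a b,
      ∫ ω, Xt i ω a * Xt j ω b ∂μ = K i j a b := by
    intro m
    induction m using Nat.strong_induction_on with
    | _ m ih =>
      intro i him j hji a b
      have hlow : ∀ k l : Fin M, k < i → l < i → ∀ c d,
          ∫ ω, Xt k ω c * Xt l ω d ∂μ = K k l c d := by
        intro k l hk hl c d
        have hkv : k.val < i.val := hk
        have hlv : l.val < i.val := hl
        rcases le_total l k with h | h
        · exact ih k.val (by omega) k rfl l h c d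
        · rw [sq_integral_mul_comm (fun ω => Xt k ω c) (fun ω => Xt l ω d),
            ih l.val (by omega) l rfl k h d c]
          exact (hKsym k l c d).symm
      rcases eq_or_ne i 0 with h0 | h0
      · subst h0
        have hj0 : j = 0 := le_antisymm hji (Fin.zero_le j)
        subst hj0
        simp only [hXt0]
        exact (hK 0 0 a b).symm
      · have hi : 0 < i := lt_of_le_of_ne (Fin.zero_le i) (Ne.symm h0)
        have hCentry : ∀ (l : Fin M), l < i → ∀ (a' d : Fin n),
            ∑ k ∈ Finset.Iio i, ∑ c, C i k a' c * K k l c d = K i l a' d := by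
          intro l hl a' d
          have h := congrFun (congrFun (hC i l hl) a') d
          simpa [Matrix.sum_apply, Matrix.mul_apply] using h
        rcases eq_or_lt_of_le hji with heq | hjlt
        · -- diagonal case j = i
          subst heq
          simp only [hXtrec j hi]
          rw [sq_int_add_mul_add (fun ω => ∑ k ∈ Finset.Iio j, ∑ c, C j k a c * Xt k ω c)
            (fun ω => N j ω a) (fun ω => ∑ l ∈ Finset.Iio j, ∑ d, C j l b d * Xt l ω d)
            (fun ω => N j ω b) (hSmem j a) (hNc j a) (hSmem j b) (hNc j b)]
          have hT1 : ∫ ω, (∑ k ∈ Finset.Iio j, ∑ c, C j k a c * Xt k ω c)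
                * (∑ l ∈ Finset.Iio j, ∑ d, C j l b d * Xt l ω d) ∂μ
              = ∑ k ∈ Finset.Iio j, ∑ c, C j k a c
                  * ∑ l ∈ Finset.Iio j, ∑ d, C j l b d * K k l c d := by
            rw [sq_int_sum_mul (Finset.Iio j) Finset.univ (fun k c => C j k a c)
              (fun k c ω => Xt k ω c)
              (fun ω => ∑ l ∈ Finset.Iio j, ∑ d, C j l b d * Xt l ω d)
              (fun k _ c _ => hXtc k c) (hSmem j b)]
            refine Finset.sum_congr rfl fun k hk => Finset.sum_congr rfl fun c _ => ?_
            rw [sq_int_mul_sum (Finset.Iio j) Finset.univ (fun l d => C j l b d)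
              (fun l d ω => Xt l ω d) (fun ω => Xt k ω c)
              (fun l _ d _ => hXtc l d) (hXtc k c)]
            congr 1
            refine Finset.sum_congr rfl fun l hl => Finset.sum_congr rfl fun d _ => ?_
            rw [hlow k l (Finset.mem_Iio.mp hk) (Finset.mem_Iio.mp hl) c d]
          have hT2 : ∫ ω, (∑ k ∈ Finset.Iio j, ∑ c, C j k a c * Xt k ω c) * N j ω b ∂μ
              = 0 := by
            rw [sq_int_sum_mul (Finset.Iio j) Finset.univ (fun k c => C j k a c)
              (fun k c ω => Xt k ω c) (fun ω => N j ω b)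
              (fun k _ c _ => hXtc k c) (hNc j b)]
            refine Finset.sum_eq_zero fun k hk => Finset.sum_eq_zero fun c _ => ?_
            rw [horth j k (Finset.mem_Iio.mp hk) b c, mul_zero]
          have hT3 : ∫ ω, N j ω a * (∑ l ∈ Finset.Iio j, ∑ d, C j l b d * Xt l ω d) ∂μ
              = 0 := by
            rw [sq_int_mul_sum (Finset.Iio j) Finset.univ (fun l d => C j l b d)
              (fun l d ω => Xt l ω d) (fun ω => N j ω a)
              (fun l _ d _ => hXtc l d) (hNc j a)]
            refine Finset.sum_eq_zero fun l hl => Finset.sum_eq_zero fun d _ => ?_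
            rw [sq_integral_mul_comm (fun ω => N j ω a) (fun ω => Xt l ω d),
              horth j l (Finset.mem_Iio.mp hl) a d, mul_zero]
          have hT4 : ∫ ω, N j ω a * N j ω b ∂μ
              = ((K j j a b - ∑ l ∈ Finset.Iio j, ∑ d, C j l b d * K j l a d)
                - ((∑ k ∈ Finset.Iio j, ∑ c, C j k a c * K k j c b)
                  - ∑ k ∈ Finset.Iio j, ∑ c, C j k a c
                      * ∑ l ∈ Finset.Iio j, ∑ d, C j l b d * K k l c d)) := by
            rw [hNcov j hi a b]
            simp only [hB]
            rw [sq_int_sub_mul_sub (fun ω => X j ω a)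
              (fun ω => ∑ k ∈ Finset.Iio j, ∑ c, C j k a c * X k ω c)
              (fun ω => X j ω b)
              (fun ω => ∑ l ∈ Finset.Iio j, ∑ d, C j l b d * X l ω d)
              (hXc j a) (hSXmem j a) (hXc j b) (hSXmem j b)]
            have e1 : ∫ ω, X j ω a * X j ω b ∂μ = K j j a b := (hK j j a b).symm
            have e2 : ∫ ω, X j ω a * (∑ l ∈ Finset.Iio j, ∑ d, C j l b d * X l ω d) ∂μ
                = ∑ l ∈ Finset.Iio j, ∑ d, C j l b d * K j l a d := by
              rw [sq_int_mul_sum (Finset.Iio j) Finset.univ (fun l d => C j l b d)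
                (fun l d ω => X l ω d) (fun ω => X j ω a)
                (fun l _ d _ => hXc l d) (hXc j a)]
              exact Finset.sum_congr rfl fun l _ => Finset.sum_congr rfl fun d _ => by
                rw [← hK j l a d]
            have e3 : ∫ ω, (∑ k ∈ Finset.Iio j, ∑ c, C j k a c * X k ω c) * X j ω b ∂μ
                = ∑ k ∈ Finset.Iio j, ∑ c, C j k a c * K k j c b := by
              rw [sq_int_sum_mul (Finset.Iio j) Finset.univ (fun k c => C j k a c)
                (fun k c ω => X k ω c) (fun ω => X j ω b)
                (fun k _ c _ => hXc k c) (hXc j b)]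
              exact Finset.sum_congr rfl fun k _ => Finset.sum_congr rfl fun c _ => by
                rw [← hK k j c b]
            have e4 : ∫ ω, (∑ k ∈ Finset.Iio j, ∑ c, C j k a c * X k ω c)
                  * (∑ l ∈ Finset.Iio j, ∑ d, C j l b d * X l ω d) ∂μ
                = ∑ k ∈ Finset.Iio j, ∑ c, C j k a c
                    * ∑ l ∈ Finset.Iio j, ∑ d, C j l b d * K k l c d := by
              rw [sq_int_sum_mul (Finset.Iio j) Finset.univ (fun k c => C j k a c)
                (fun k c ω => X k ω c)
                (fun ω => ∑ l ∈ Finset.Iio j, ∑ d, C j l b d * X l ω d)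
                (fun k _ c _ => hXc k c) (hSXmem j b)]
              refine Finset.sum_congr rfl fun k _ => Finset.sum_congr rfl fun c _ => ?_
              rw [sq_int_mul_sum (Finset.Iio j) Finset.univ (fun l d => C j l b d)
                (fun l d ω => X l ω d) (fun ω => X k ω c)
                (fun l _ d _ => hXc l d) (hXc k c)]
              congr 1
              exact Finset.sum_congr rfl fun l _ => Finset.sum_congr rfl fun d _ => by
                rw [← hK k l c d]
            rw [e1, e2, e3, e4]
          rw [hT1, hT2, hT3, hT4]
          -- the two normal-equation identities
          have hQ1 : (∑ k ∈ Finset.Iio j, ∑ c, C j k a c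
                * ∑ l ∈ Finset.Iio j, ∑ d, C j l b d * K k l c d)
              = ∑ l ∈ Finset.Iio j, ∑ d, C j l b d * K j l a d :=
            calc (∑ k ∈ Finset.Iio j, ∑ c, C j k a c
                  * ∑ l ∈ Finset.Iio j, ∑ d, C j l b d * K k l c d)
                = ∑ k ∈ Finset.Iio j, ∑ c, ∑ l ∈ Finset.Iio j, ∑ d,
                    C j k a c * (C j l b d * K k l c d) := by
                  simp only [Finset.mul_sum]
              _ = ∑ l ∈ Finset.Iio j, ∑ d, ∑ k ∈ Finset.Iio j, ∑ c,
                    C j k a c * (C j l b d * K k l c d) := sq_sum_swap4 _ _ _ _ _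
              _ = ∑ l ∈ Finset.Iio j, ∑ d, C j l b d
                    * ∑ k ∈ Finset.Iio j, ∑ c, C j k a c * K k l c d := by
                  refine Finset.sum_congr rfl fun l _ => Finset.sum_congr rfl fun d _ => ?_
                  simp only [Finset.mul_sum]
                  exact Finset.sum_congr rfl fun k _ => Finset.sum_congr rfl fun c _ => by ring
              _ = ∑ l ∈ Finset.Iio j, ∑ d, C j l b d * K j l a d :=
                  Finset.sum_congr rfl fun l hl => Finset.sum_congr rfl fun d _ => by
                    rw [hCentry l (Finset.mem_Iio.mp hl) a d]
          have hQ2 : (∑ k ∈ Finset.Iio j, ∑ c, C j k a c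
                * ∑ l ∈ Finset.Iio j, ∑ d, C j l b d * K k l c d)
              = ∑ k ∈ Finset.Iio j, ∑ c, C j k a c * K k j c b :=
            calc (∑ k ∈ Finset.Iio j, ∑ c, C j k a c
                  * ∑ l ∈ Finset.Iio j, ∑ d, C j l b d * K k l c d)
                = ∑ k ∈ Finset.Iio j, ∑ c, C j k a c
                    * ∑ l ∈ Finset.Iio j, ∑ d, C j l b d * K l k d c := by
                  refine Finset.sum_congr rfl fun k _ => Finset.sum_congr rfl fun c _ => ?_
                  congr 1
                  exact Finset.sum_congr rfl fun l _ => Finset.sum_congr rfl fun d _ => by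
                    rw [hKsym k l c d]
              _ = ∑ k ∈ Finset.Iio j, ∑ c, C j k a c * K j k b c :=
                  Finset.sum_congr rfl fun k hk => Finset.sum_congr rfl fun c _ => by
                    rw [hCentry k (Finset.mem_Iio.mp hk) b c]
              _ = ∑ k ∈ Finset.Iio j, ∑ c, C j k a c * K k j c b :=
                  Finset.sum_congr rfl fun k _ => Finset.sum_congr rfl fun c _ => by
                    rw [hKsym j k b c]
          linarith [hQ1, hQ2]
        · -- off-diagonal case j < i
          simp only [hXtrec i hi]
          rw [sq_int_add_mul (fun ω => ∑ k ∈ Finset.Iio i, ∑ c, C i k a c * Xt k ω c)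
            (fun ω => N i ω a) (fun ω => Xt j ω b) (hSmem i a) (hNc i a) (hXtc j b)]
          have hA : ∫ ω, (∑ k ∈ Finset.Iio i, ∑ c, C i k a c * Xt k ω c) * Xt j ω b ∂μ
              = K i j a b := by
            rw [sq_int_sum_mul (Finset.Iio i) Finset.univ (fun k c => C i k a c)
              (fun k c ω => Xt k ω c) (fun ω => Xt j ω b)
              (fun k _ c _ => hXtc k c) (hXtc j b)]
            rw [show (∑ k ∈ Finset.Iio i, ∑ c, C i k a c * ∫ ω, Xt k ω c * Xt j ω b ∂μ)
                = ∑ k ∈ Finset.Iio i, ∑ c, C i k a c * K k j c b from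
              Finset.sum_congr rfl fun k hk => Finset.sum_congr rfl fun c _ => by
                rw [hlow k j (Finset.mem_Iio.mp hk) hjlt c b]]
            exact hCentry j hjlt a b
          have hB' : ∫ ω, N i ω a * Xt j ω b ∂μ = 0 := by
            rw [sq_integral_mul_comm (fun ω => N i ω a) (fun ω => Xt j ω b)]
            exact horth i j hjlt a b
          rw [hA, hB', add_zero]
  intro i j a b
  rcases le_total j i with h | h
  · exact main i.val i rfl j h a b
  · rw [sq_integral_mul_comm (fun ω => Xt i ω a) (fun ω => Xt j ω b),
      main j.val j rfl i h b a]
    exact (hKsym i j a b).symm
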